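/- Let v₀, …, vₙ be n+1 affinely independent points in ℝⁿ with squared pairwise distances d_{ij} = ‖vᵢ − vⱼ‖² for 0 ≤ i < j ≤ n, and let D₀, …, Dₙ ≥ 0 be real numbers. Then there exists a point v ∈ ℝⁿ with ‖v − vᵢ‖² = Dᵢ for all i = 0, …, n if and only if the determinant of the (n+3)×(n+3) augmented Cayley–Menger matrix is zero, where this matrix has first row (0, 1, 1, …, 1), second row (1, 0, D₀, D₁, …, Dₙ), and for i = 0, …, n the (i+3)-rd row is (1, Dᵢ, d_{i0}, …, d_{in}) with the convention d_{ii} = 0 and d_{ij} = d_{ji}. -/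

import Mathlib

open scoped RealInnerProductSpace

section
variable {n : ℕ} {v : Fin (n + 1) → EuclideanSpace ℝ (Fin n)}

/-- squared norm as a coordinate sum -/
lemma cm_norm_sq (x : EuclideanSpace ℝ (Fin n)) : ‖x‖ ^ 2 = ∑ k, x k * x k := by
  rw [← real_inner_self_eq_norm_sq]
  simp only [PiLp.inner_apply, RCLike.inner_apply, conj_trivial]

lemma cm_dist_sq (x y : EuclideanSpace ℝ (Fin n)) :
    dist x y ^ 2 = ‖x‖ ^ 2 + ‖y‖ ^ 2 - 2 * ∑ k, x k * y k := by
  rw [dist_eq_norm, norm_sub_sq_real]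
  simp [PiLp.inner_apply, RCLike.inner_apply]
  rw [Finset.sum_congr rfl fun k _ => mul_comm (y k) (x k)]
  ring

/-- affine independence: weights summing to zero with zero combination vanish -/
lemma cm_weights (hv : AffineIndependent ℝ v) (x : Fin (n + 1) → ℝ)
    (h0 : ∑ i, x i = 0) (h1 : ∑ i, x i • v i = 0) : ∀ i, x i = 0 := by
  rw [affineIndependent_iff_of_fintype] at hv
  exact hv x h0 (by rw [Finset.weightedVSub_eq_linear_combination _ h0]; exact h1)

/-- vectors orthogonal to all differences v i - v 0 vanish -/
lemma cm_orth (hv : AffineIndependent ℝ v) (w : EuclideanSpace ℝ (Fin n))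
    (hw : ∀ i, (inner ℝ (v i - v 0) (w) : ℝ) = 0) : w = 0 := by
  have hli : LinearIndependent ℝ (fun k : Fin n => v k.succ - v 0) := by
    have h := (affineIndependent_iff_linearIndependent_vsub ℝ v 0).mp hv
    have := h.comp (fun k : Fin n => (⟨k.succ, Fin.succ_ne_zero k⟩ : {x : Fin (n+1) // x ≠ 0}))
      (fun a b hab => by
        simpa using Fin.succ_injective _ (congrArg Subtype.val hab))
    simpa [vsub_eq_sub, Function.comp_def] using this
  have hspan : Submodule.span ℝ (Set.range fun k : Fin n => v k.succ - v 0) = ⊤ :=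
    hli.span_eq_top_of_card_eq_finrank' (by simp [finrank_euclideanSpace_fin])
  have hwmem : w ∈ Submodule.span ℝ (Set.range fun k : Fin n => v k.succ - v 0) := by
    rw [hspan]; trivial
  rw [Submodule.mem_span_range_iff_exists_fun ℝ] at hwmem
  obtain ⟨c, hc⟩ := hwmem
  have : (inner ℝ (w) (w) : ℝ) = 0 := by
    nth_rewrite 1 [← hc]
    rw [sum_inner]
    refine Finset.sum_eq_zero fun k _ => ?_
    rw [real_inner_smul_left, hw k.succ, mul_zero]
  exact inner_self_eq_zero.mp this

/-- existence of a point with prescribed inner products against the differences -/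
lemma cm_exists_point (hv : AffineIndependent ℝ v) (g : Fin (n + 1) → ℝ) (hg : g 0 = 0) :
    ∃ p : EuclideanSpace ℝ (Fin n), ∀ i, (inner ℝ (v i - v 0) (p) : ℝ) = g i := by
  let T : EuclideanSpace ℝ (Fin n) →ₗ[ℝ] (Fin n → ℝ) :=
    { toFun := fun x => fun k => (inner ℝ (v k.succ - v 0) (x) : ℝ)
      map_add' := by intro a b; ext k; simp [inner_add_right]
      map_smul' := by
        intro c a; ext k; simp [real_inner_smul_right, Finset.mul_sum] }
  have hinj : Function.Injective T := by
    rw [← LinearMap.ker_eq_bot, LinearMap.ker_eq_bot']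
    intro x hx
    refine cm_orth hv x fun i => ?_
    refine Fin.cases ?_ (fun k => ?_) i
    · simp
    · exact congrFun hx k
  have hsurj : Function.Surjective T :=
    (LinearMap.injective_iff_surjective_of_finrank_eq_finrank
      (by simp [finrank_euclideanSpace_fin])).mp hinj
  obtain ⟨p, hp⟩ := hsurj (fun k => g k.succ)
  refine ⟨p, fun i => ?_⟩
  refine Fin.cases ?_ (fun k => ?_) i
  · simp [hg]
  · exact congrFun hp k


noncomputable def cmR (v : Fin (n + 1) → EuclideanSpace ℝ (Fin n)) (p : EuclideanSpace ℝ (Fin n)) (t : ℝ) :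
    Matrix (Fin (n + 3)) (Fin (n + 3)) ℝ :=
  Matrix.of (Fin.cons (Fin.cons 1 fun _ => 0)
    (Fin.cons (Fin.cons (‖p‖ ^ 2 + t) (Fin.cons 1 (Fin.cons 1 fun k => p k)))
      (fun i => Fin.cons (‖v i‖ ^ 2) (Fin.cons 1 (Fin.cons 0 fun k => v i k)))))

noncomputable def cmS (v : Fin (n + 1) → EuclideanSpace ℝ (Fin n)) (p : EuclideanSpace ℝ (Fin n)) (t : ℝ) :
    Matrix (Fin (n + 3)) (Fin (n + 3)) ℝ :=
  Matrix.of (Fin.cons (Fin.cons 0 (Fin.cons 1 fun _ => 1))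
    (Fin.cons (Fin.cons 1 (Fin.cons (‖p‖ ^ 2 + t) fun i => ‖v i‖ ^ 2))
      (Fin.cons (Fin.cons 0 (Fin.cons (-1) fun _ => 0))
        (fun k => Fin.cons 0 (Fin.cons (-2 * p k) fun i => -2 * v i k)))))

def cmd (t : ℝ) : Fin (n + 3) → ℝ := Fin.cons 1 (Fin.cons 1 (Fin.cons (2 * t) fun _ => 1))

lemma cm_prod_d (t : ℝ) : ∏ s, cmd (n := n) t s = 2 * t := by
  simp [cmd, Fin.prod_univ_succ]

lemma cm_norm_sq' (x : EuclideanSpace ℝ (Fin n)) : ‖x‖ ^ 2 = ∑ k, x k * x k := by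
  rw [← real_inner_self_eq_norm_sq]
  simp only [PiLp.inner_apply, RCLike.inner_apply, conj_trivial]

lemma cm_dist_sq' (x y : EuclideanSpace ℝ (Fin n)) :
    dist x y ^ 2 = ‖x‖ ^ 2 + ‖y‖ ^ 2 - 2 * ∑ k, x k * y k := by
  rw [dist_eq_norm, norm_sub_sq_real]
  simp [PiLp.inner_apply, RCLike.inner_apply]
  rw [Finset.sum_congr rfl fun k _ => mul_comm (y k) (x k)]
  ring

lemma cm_sum2 (a b : EuclideanSpace ℝ (Fin n)) :
    (∑ x, -(a x * (2 * b x))) = -(2 * ∑ x, a x * b x) := by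
  rw [Finset.mul_sum, ← Finset.sum_neg_distrib]
  exact Finset.sum_congr rfl fun x _ => by ring

lemma cm_sum_comm (a b : EuclideanSpace ℝ (Fin n)) :
    (∑ x, a x * b x) = ∑ x, b x * a x :=
  Finset.sum_congr rfl fun x _ => mul_comm _ _

lemma cm_factor (v : Fin (n + 1) → EuclideanSpace ℝ (Fin n)) (p : EuclideanSpace ℝ (Fin n))
    (t : ℝ) :
    (Matrix.of
        (Fin.cons (Fin.cons 0 fun _ => 1)
          (Fin.cons (Fin.cons 1 (Fin.cons 0 fun j => dist p (v j) ^ 2 + t))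
            (fun i : Fin (n + 1) =>
              Fin.cons 1 (Fin.cons (dist p (v i) ^ 2 + t)
                fun j : Fin (n + 1) => dist (v i) (v j) ^ 2)))) :
        Matrix (Fin (n + 3)) (Fin (n + 3)) ℝ)
      = cmR v p t * (Matrix.diagonal (cmd t) * cmS v p t) := by
  ext i j
  rw [Matrix.mul_apply]
  simp only [Matrix.diagonal_mul]
  refine Fin.cases ?_ (fun i => ?_) i
  all_goals try refine Fin.cases ?_ (fun i => ?_) i
  all_goals refine Fin.cases ?_ (fun j => ?_) j
  all_goals try refine Fin.cases ?_ (fun j => ?_) j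
  all_goals simp only [cmR, cmS, cmd, Matrix.of_apply, Fin.cons_zero, Fin.cons_succ,
    Fin.sum_univ_succ, mul_zero, zero_mul, mul_one, one_mul, add_zero, zero_add,
    Finset.sum_const_zero, neg_mul, mul_neg, neg_neg]
  · simp only [cm_sum2, cm_norm_sq']; ring
  · rw [cm_dist_sq']; simp only [cm_sum2]; ring
  · rw [cm_dist_sq']; simp only [cm_sum2]; rw [cm_sum_comm (v i) p]; ring
  · rw [cm_dist_sq']; simp only [cm_sum2]; ring

lemma cm_detS_ne (hv : AffineIndependent ℝ v) (p : EuclideanSpace ℝ (Fin n)) (t : ℝ) :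
    (cmS v p t).det ≠ 0 := by
  intro hdet
  rw [← Matrix.exists_mulVec_eq_zero_iff] at hdet
  obtain ⟨x, hx0, hx⟩ := hdet
  have h0 := congrFun hx 0
  have h1 := congrFun hx ((0 : Fin (n + 2)).succ)
  have h2 := congrFun hx (((0 : Fin (n + 1)).succ).succ)
  have h3 := fun k : Fin n => congrFun hx k.succ.succ.succ
  simp only [cmS, Matrix.mulVec, dotProduct, Matrix.of_apply, Fin.cons_zero,
    Fin.cons_succ, Fin.sum_univ_succ, Pi.zero_apply, mul_zero, zero_mul, mul_one, one_mul,
    add_zero, zero_add, Finset.sum_const_zero, neg_mul, mul_neg, neg_neg, one_mul] at h0 h1 h2 h3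
  have hx1 : x (Fin.succ 0) = 0 := by linarith
  have hsum : ∑ i : Fin (n + 1), x i.succ.succ = 0 := by
    rw [Fin.sum_univ_succ]; linarith
  have hvec : ∑ i : Fin (n + 1), x i.succ.succ • v i = 0 := by
    ext k
    have happ : (∑ i : Fin (n + 1), x i.succ.succ • v i) k
        = ∑ i : Fin (n + 1), x i.succ.succ * v i k :=
      by simp
    have e : ∑ i : Fin n, -(2 * v i.succ k * x i.succ.succ.succ)
        = -(2 * ∑ i : Fin n, v i.succ k * x i.succ.succ.succ) := by
      rw [Finset.mul_sum, ← Finset.sum_neg_distrib]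
      exact Finset.sum_congr rfl fun i _ => by ring
    have h3k := h3 k
    rw [e, hx1] at h3k
    show _ = (0 : ℝ)
    rw [happ, Fin.sum_univ_succ,
      show ∑ i : Fin n, x i.succ.succ.succ * v i.succ k
          = ∑ i : Fin n, v i.succ k * x i.succ.succ.succ from
        Finset.sum_congr rfl fun i _ => mul_comm _ _]
    linarith
  have hwz : ∀ i : Fin (n + 1), x i.succ.succ = 0 := fun i => by
    simpa using cm_weights hv (fun i : Fin (n + 1) => x i.succ.succ) hsum hvec i
  have hxz : x 0 = 0 := by
    have e1 : ∑ i : Fin n, ‖v i.succ‖ ^ 2 * x i.succ.succ.succ = 0 :=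
      Finset.sum_eq_zero fun i _ => by rw [hwz i.succ]; ring
    have e2 := hwz 0
    rw [e1, e2, hx1] at h1
    linarith
  refine hx0 (funext fun j => ?_)
  refine Fin.cases ?_ (fun j => ?_) j
  · exact hxz
  · refine Fin.cases ?_ (fun j => ?_) j
    · exact hx1
    · exact hwz j

lemma cm_detR_ne (hv : AffineIndependent ℝ v) (p : EuclideanSpace ℝ (Fin n)) (t : ℝ) :
    (cmR v p t).det ≠ 0 := by
  intro hdet
  rw [← Matrix.exists_mulVec_eq_zero_iff] at hdet
  obtain ⟨y, hy0, hy⟩ := hdet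
  have h0 := congrFun hy 0
  have h1 := congrFun hy ((0 : Fin (n + 2)).succ)
  have h2 := fun i : Fin (n + 1) => congrFun hy i.succ.succ
  simp only [cmR, Matrix.mulVec, dotProduct, Matrix.of_apply, Fin.cons_zero,
    Fin.cons_succ, Fin.sum_univ_succ, Pi.zero_apply, mul_zero, zero_mul, mul_one, one_mul,
    add_zero, zero_add, Finset.sum_const_zero] at h0 h1 h2
  set w : EuclideanSpace ℝ (Fin n) := WithLp.toLp 2 (fun k => y k.succ.succ.succ) with hw
  have hinner : ∀ i, (inner ℝ (v i - v 0) w : ℝ) = 0 := by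
    intro i
    simp only [PiLp.inner_apply, RCLike.inner_apply, conj_trivial, PiLp.sub_apply, hw]
    have e : ∑ k : Fin n, y k.succ.succ.succ * (v i k - v 0 k)
        = (∑ k : Fin n, v i k * y k.succ.succ.succ)
          - ∑ k : Fin n, v 0 k * y k.succ.succ.succ := by
      rw [← Finset.sum_sub_distrib]
      exact Finset.sum_congr rfl fun k _ => by ring
    rw [e]
    have hi := h2 i
    have hz := h2 0
    rw [h0] at hi hz
    linarith
  have hwzero : w = 0 := cm_orth hv w hinner
  have hwz : ∀ k : Fin n, y k.succ.succ.succ = 0 := fun k => by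
    have := congrArg (fun z : EuclideanSpace ℝ (Fin n) => z k) hwzero
    simpa [hw] using this
  have hsz : ∀ i : Fin (n + 1), ∑ k : Fin n, v i k * y k.succ.succ.succ = 0 := fun i =>
    Finset.sum_eq_zero fun k _ => by rw [hwz k]; ring
  have hy1 : y (Fin.succ 0) = 0 := by
    have hz := h2 0
    rw [h0, hsz 0] at hz
    linarith
  have hy2 : y (Fin.succ 0).succ = 0 := by
    have e : ∑ k : Fin n, p k * y k.succ.succ.succ = 0 :=
      Finset.sum_eq_zero fun k _ => by rw [hwz k]; ring
    rw [h0, e, hy1] at h1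
    linarith
  refine hy0 (funext fun j => ?_)
  refine Fin.cases ?_ (fun j => ?_) j
  · exact h0
  · refine Fin.cases ?_ (fun j => ?_) j
    · exact hy1
    · refine Fin.cases ?_ (fun j => ?_) j
      · exact hy2
      · exact hwz j

end

lemma cm_det_formula (v : Fin (n + 1) → EuclideanSpace ℝ (Fin n))
    (p : EuclideanSpace ℝ (Fin n)) (t : ℝ) (D : Fin (n + 1) → ℝ)
    (hDt : ∀ i, D i = dist p (v i) ^ 2 + t) :
    (Matrix.of
        (Fin.cons (Fin.cons 0 fun _ => 1)
          (Fin.cons (Fin.cons 1 (Fin.cons 0 fun j => D j))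
            (fun i : Fin (n + 1) =>
              Fin.cons 1 (Fin.cons (D i) fun j : Fin (n + 1) => dist (v i) (v j) ^ 2)))) :
        Matrix (Fin (n + 3)) (Fin (n + 3)) ℝ).det
      = (cmR v p t).det * (2 * t * (cmS v p t).det) := by
  have hD : D = fun i => dist p (v i) ^ 2 + t := funext hDt
  subst hD
  have h := congrArg Matrix.det (cm_factor v p t)
  rw [Matrix.det_mul, Matrix.det_mul, Matrix.det_diagonal, cm_prod_d] at h
  exact h


/-- Cayley–Menger criterion: given `n + 1` affinely independent points of `ℝⁿ` and
nonnegative prescribed squared distances `D i`, a point realizing those squared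
distances exists iff the determinant of the augmented Cayley–Menger matrix vanishes.
The matrix has first row `(0, 1, …, 1)`, second row `(1, 0, D 0, …, D n)` and
remaining rows `(1, D i, d i 0, …, d i n)` with `d i j = ‖v i − v j‖²`. -/
theorem cayley_menger_exists_point_iff_det_eq_zero
    (n : ℕ) (v : Fin (n + 1) → EuclideanSpace ℝ (Fin n))
    (hv : AffineIndependent ℝ v)
    (D : Fin (n + 1) → ℝ) (hD : ∀ i, 0 ≤ D i) :
    (∃ p : EuclideanSpace ℝ (Fin n), ∀ i, dist p (v i) ^ 2 = D i) ↔
      (Matrix.of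
        (Fin.cons (Fin.cons 0 fun _ => 1)
          (Fin.cons (Fin.cons 1 (Fin.cons 0 fun j => D j))
            (fun i : Fin (n + 1) =>
              Fin.cons 1 (Fin.cons (D i) fun j : Fin (n + 1) => dist (v i) (v j) ^ 2)))) :
        Matrix (Fin (n + 3)) (Fin (n + 3)) ℝ).det = 0 := by
  classical
  obtain ⟨p, hp⟩ := cm_exists_point hv
    (fun i => (‖v i‖ ^ 2 - ‖v 0‖ ^ 2 + D 0 - D i) / 2) (by ring)
  set t : ℝ := D 0 - dist p (v 0) ^ 2 with ht
  have hDt : ∀ i, D i = dist p (v i) ^ 2 + t := by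
    intro i
    have hpi := hp i
    rw [ht, cm_dist_sq' p (v i), cm_dist_sq' p (v 0)]
    simp only [PiLp.inner_apply, RCLike.inner_apply, conj_trivial, PiLp.sub_apply] at hpi
    have e : ∑ x : Fin n, p x * (v i x - v 0 x)
        = (∑ x, p x * v i x) - ∑ x, p x * v 0 x := by
      rw [← Finset.sum_sub_distrib]; exact Finset.sum_congr rfl fun k _ => by ring
    rw [e] at hpi
    linarith
  constructor
  · rintro ⟨q, hq⟩
    have h := cm_det_formula v q 0 D (fun i => by rw [← hq i, add_zero])
    rw [h]; ring
  · intro hdet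
    rw [cm_det_formula v p t D hDt] at hdet
    have ht0 : t = 0 := by
      simpa [mul_eq_zero, cm_detR_ne hv p t, cm_detS_ne hv p t] using hdet
    exact ⟨p, fun i => by rw [hDt i, ht0, add_zero]⟩
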